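/- arXiv:2405.15016 — 4 statements merged into one kernel-verified Lean document; each statement's English description precedes it below -/
import Mathlib

section
/- Let N ≥ 2, and for each pair n,k ∈ {1,...,N} let κ_{nk} be bounded functions on a measure space satisfying: |κ_{nn}| = a on the complement of σ_n and |κ_{nn}| = 1 on σ_n; and for n ≠ k, |κ_{nk}| = b off σ_k and |κ_{nk}| = 1 on σ_k, where σ₁,...,σ_N are pairwise disjoint sets whose union has full measure and a, b > 0. Then for almost every point ζ, every permutation {n_j} of {1,...,N} with n_j ≠ j for at least one j satisfies |∏_{j=1}^N κ_{n_j j}(ζ)| ≤ b, and hence |det[κ_{nk}(ζ)]| ≥ a^{N-1}·(value of diagonal product modulus)/a^{N-1} − N!·b ≥ a^{N-1} − N!·b whenever the diagonal product has modulus a^{N-1} a.e. -/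
open MeasureTheory Set

theorem stmt1 {Ω : Type*} [MeasurableSpace Ω] (μ : Measure Ω) (N : ℕ) (hN : 2 ≤ N)
    (a b : ℝ) (ha : 0 < a) (hb : 0 < b) (ha1 : a ≤ 1) (hb1 : b ≤ 1)
    (σ : Fin N → Set Ω) (hmeas : ∀ n, MeasurableSet (σ n))
    (hdisj : Pairwise fun n k => Disjoint (σ n) (σ k))
    (hfull : μ (⋃ n, σ n)ᶜ = 0)
    (κ : Fin N → Fin N → Ω → ℂ)
    (hdiag : ∀ n ζ, (ζ ∈ σ n → ‖κ n n ζ‖ = 1) ∧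
      (ζ ∉ σ n → ‖κ n n ζ‖ = a))
    (hoff : ∀ n k ζ, n ≠ k → ((ζ ∈ σ k → ‖κ n k ζ‖ = 1) ∧
      (ζ ∉ σ k → ‖κ n k ζ‖ = b))) :
    (∀ᵐ ζ ∂μ, ∀ π : Equiv.Perm (Fin N), (∃ j, π j ≠ j) →
        ‖∏ j, κ (π j) j ζ‖ ≤ b) ∧
    ((∀ᵐ ζ ∂μ, ‖∏ n, κ n n ζ‖ = a ^ (N - 1)) →
      ∀ᵐ ζ ∂μ, a ^ (N - 1) - (N.factorial : ℝ) * b ≤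
        ‖Matrix.det (Matrix.of fun n k => κ n k ζ)‖) := by
  have habs_le : ∀ n k ζ, ‖κ n k ζ‖ ≤ 1 := by
    intro n k ζ
    by_cases hnk : n = k
    · subst hnk
      by_cases h : ζ ∈ σ n
      · rw [(hdiag n ζ).1 h]
      · rw [(hdiag n ζ).2 h]; exact ha1
    · by_cases h : ζ ∈ σ k
      · rw [(hoff n k ζ hnk).1 h]
      · rw [(hoff n k ζ hnk).2 h]; exact hb1
  have hmem : ∀ᵐ ζ ∂μ, ζ ∈ ⋃ n, σ n := by
    rw [ae_iff]
    simpa [compl_def] using hfull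
  have hperm : ∀ ζ, ζ ∈ ⋃ n, σ n → ∀ π : Equiv.Perm (Fin N), (∃ j, π j ≠ j) →
      ‖∏ j, κ (π j) j ζ‖ ≤ b := by
    rintro ζ hζ π ⟨j, hj⟩
    obtain ⟨k, hk⟩ := mem_iUnion.mp hζ
    obtain ⟨l, hlk, hl⟩ : ∃ l, l ≠ k ∧ π l ≠ l := by
      by_cases hjk : j = k
      · subst hjk
        exact ⟨π j, hj, fun h => hj (π.injective h)⟩
      · exact ⟨j, hjk, hj⟩
    have hζl : ζ ∉ σ l := fun h => Set.disjoint_left.mp (hdisj hlk) h hk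
    have hfac : ‖κ (π l) l ζ‖ = b := (hoff (π l) l ζ hl).2 hζl
    rw [norm_prod]
    calc ∏ j, ‖κ (π j) j ζ‖
        = ‖κ (π l) l ζ‖ *
          ∏ j ∈ Finset.univ.erase l, ‖κ (π j) j ζ‖ :=
          (Finset.mul_prod_erase _ _ (Finset.mem_univ l)).symm
      _ ≤ b * 1 := by
          rw [hfac]
          exact mul_le_mul_of_nonneg_left
            (Finset.prod_le_one (fun i _ => norm_nonneg _)
              (fun i _ => habs_le _ _ _)) hb.le
      _ = b := mul_one b
  constructor
  · filter_upwards [hmem] with ζ hζ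
    exact hperm ζ hζ
  · intro hdiagae
    filter_upwards [hmem, hdiagae] with ζ hζ hd
    set M : Matrix (Fin N) (Fin N) ℂ := Matrix.of fun n k => κ n k ζ with hM
    have hdet : M.det = (∏ j, κ j j ζ) +
        ∑ π ∈ Finset.univ.erase (1 : Equiv.Perm (Fin N)),
          Equiv.Perm.sign π • ∏ j, κ (π j) j ζ := by
      rw [Matrix.det_apply, ← Finset.add_sum_erase _ _ (Finset.mem_univ 1)]
      simp [hM]
    have hsmul : ∀ (π : Equiv.Perm (Fin N)) (z : ℂ),
        ‖Equiv.Perm.sign π • z‖ = ‖z‖ := by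
      intro π z
      rcases Int.units_eq_one_or (Equiv.Perm.sign π) with h | h <;>
        simp [h, Units.smul_def]
    have hrest : ‖∑ π ∈ Finset.univ.erase (1 : Equiv.Perm (Fin N)),
        Equiv.Perm.sign π • ∏ j, κ (π j) j ζ‖ ≤ (N.factorial : ℝ) * b := by
      calc ‖∑ π ∈ Finset.univ.erase (1 : Equiv.Perm (Fin N)),
            Equiv.Perm.sign π • ∏ j, κ (π j) j ζ‖
          ≤ ∑ π ∈ Finset.univ.erase (1 : Equiv.Perm (Fin N)),
            ‖Equiv.Perm.sign π • ∏ j, κ (π j) j ζ‖ :=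
            norm_sum_le _ _
        _ ≤ ∑ π ∈ Finset.univ.erase (1 : Equiv.Perm (Fin N)), b := by
            refine Finset.sum_le_sum fun π hπ => ?_
            rw [hsmul]
            refine hperm ζ hζ π ?_
            by_contra h
            push_neg at h
            exact (Finset.mem_erase.mp hπ).1 (Equiv.ext fun j => h j)
        _ = ((Finset.univ.erase (1 : Equiv.Perm (Fin N))).card : ℝ) * b := by
            rw [Finset.sum_const, nsmul_eq_mul]
        _ ≤ (N.factorial : ℝ) * b := by
            refine mul_le_mul_of_nonneg_right ?_ hb.le
            have : (Finset.univ.erase (1 : Equiv.Perm (Fin N))).card ≤ N.factorial := by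
              calc (Finset.univ.erase (1 : Equiv.Perm (Fin N))).card
                  ≤ (Finset.univ : Finset (Equiv.Perm (Fin N))).card :=
                    Finset.card_le_card (Finset.erase_subset _ _)
                _ = N.factorial := by simp [Fintype.card_perm]
            exact_mod_cast this
    have htri : ‖∏ j, κ j j ζ‖ -
        ‖∑ π ∈ Finset.univ.erase (1 : Equiv.Perm (Fin N)),
          Equiv.Perm.sign π • ∏ j, κ (π j) j ζ‖ ≤ ‖M.det‖ := by
      rw [hdet]
      have := norm_add_le ((∏ j, κ j j ζ) +
        ∑ π ∈ Finset.univ.erase (1 : Equiv.Perm (Fin N)),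
          Equiv.Perm.sign π • ∏ j, κ (π j) j ζ)
        (-(∑ π ∈ Finset.univ.erase (1 : Equiv.Perm (Fin N)),
          Equiv.Perm.sign π • ∏ j, κ (π j) j ζ))
      simp only [add_neg_cancel_right, norm_neg] at this
      linarith
    rw [← hd] at *
    linarith
end

section
/- Let Θ be the 2×2 matrix function on 𝔻 defined by Θ = [ (c·ϑ₂/2)·((1−z)ϑ₁ − (1+z)ϑ₁(0))/z , (c/2)·((1+z)ϑ₁ − (1−z)ϑ₁(0))/z ; (c̄·ϑ₂/2)·(1+z + (1−z)ϑ₁·conj(ϑ₁(0))) , (c̄/2)·(1−z + (1+z)ϑ₁·conj(ϑ₁(0))) ], where ϑ₁, ϑ₂ are inner functions (|ϑ_i| = 1 a.e. on 𝕋), and c ∈ ℂ satisfies |c|² = 1/(1 + |ϑ₁(0)|²). Then Θ(ζ)*Θ(ζ) = I (the 2×2 identity) for almost every ζ ∈ 𝕋, and det Θ = −ϑ₁ϑ₂. -/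
set_option maxHeartbeats 1000000

open Matrix

private lemma fin2_ct (p q r s : ℂ) :
    !![p, q; r, s]ᴴ = !![starRingEnd ℂ p, starRingEnd ℂ r; starRingEnd ℂ q, starRingEnd ℂ s] := by
  ext i j
  fin_cases i <;> fin_cases j <;> rfl

private lemma fin2_unitary (p q r s : ℂ)
    (h00 : starRingEnd ℂ p * p + starRingEnd ℂ r * r = 1)
    (h01 : starRingEnd ℂ p * q + starRingEnd ℂ r * s = 0)
    (h10 : starRingEnd ℂ q * p + starRingEnd ℂ s * r = 0)
    (h11 : starRingEnd ℂ q * q + starRingEnd ℂ s * s = 1) :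
    !![p, q; r, s]ᴴ * !![p, q; r, s] = 1 := by
  rw [fin2_ct, Matrix.mul_fin_two, Matrix.one_fin_two, h00, h01, h10, h11]

theorem stmt13 (ϑ₁ ϑ₂ : ℂ → ℂ) (c : ℂ)
    (hc : ‖c‖ ^ 2 = 1 / (1 + ‖ϑ₁ 0‖ ^ 2))
    (Θ : ℂ → Matrix (Fin 2) (Fin 2) ℂ)
    (hΘ : ∀ z : ℂ, Θ z =
      !![c * ϑ₂ z / 2 * (((1 - z) * ϑ₁ z - (1 + z) * ϑ₁ 0) / z),
         c / 2 * (((1 + z) * ϑ₁ z - (1 - z) * ϑ₁ 0) / z);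
         (starRingEnd ℂ) c * ϑ₂ z / 2 * (1 + z + (1 - z) * ϑ₁ z * (starRingEnd ℂ) (ϑ₁ 0)),
         (starRingEnd ℂ) c / 2 * (1 - z + (1 + z) * ϑ₁ z * (starRingEnd ℂ) (ϑ₁ 0))]) :
    (∀ ζ : ℂ, ‖ζ‖ = 1 → ‖ϑ₁ ζ‖ = 1 → ‖ϑ₂ ζ‖ = 1 →
        (Θ ζ)ᴴ * Θ ζ = 1) ∧
    ∀ z : ℂ, z ≠ 0 → (Θ z).det = -(ϑ₁ z * ϑ₂ z) := by
  set a := ϑ₁ 0 with ha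
  have hpos : (0:ℝ) < 1 + ‖a‖ ^ 2 := by positivity
  have hcpos : (0:ℝ) < ‖c‖ ^ 2 := by rw [hc]; positivity
  have hcne : c ≠ 0 := by intro h; simp [h] at hcpos
  have key : c * (starRingEnd ℂ) c * (1 + (starRingEnd ℂ) a * a) = 1 := by
    have h1 : c * (starRingEnd ℂ) c = ((‖c‖ ^ 2 : ℝ) : ℂ) := by
      rw [Complex.mul_conj, Complex.sq_norm]
    have h2 : (starRingEnd ℂ) a * a = ((‖a‖ ^ 2 : ℝ) : ℂ) := by
      rw [mul_comm, Complex.mul_conj, Complex.sq_norm]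
    have hne := hpos.ne'
    rw [h1, h2, hc]
    norm_cast
    field_simp
  constructor
  · intro ζ h1 h2 h3
    have hζ : ζ ≠ 0 := by intro h; rw [h] at h1; simp at h1
    have hθ1 : ϑ₁ ζ ≠ 0 := by intro h; rw [h] at h2; simp at h2
    have hθ2 : ϑ₂ ζ ≠ 0 := by intro h; rw [h] at h3; simp at h3
    have cζ : (starRingEnd ℂ) ζ = ζ⁻¹ := by
      apply eq_inv_of_mul_eq_one_left
      rw [mul_comm, Complex.mul_conj]
      norm_cast
      rw [Complex.normSq_eq_norm_sq, h1]; norm_num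
    have cθ1 : (starRingEnd ℂ) (ϑ₁ ζ) = (ϑ₁ ζ)⁻¹ := by
      apply eq_inv_of_mul_eq_one_left
      rw [mul_comm, Complex.mul_conj]
      norm_cast
      rw [Complex.normSq_eq_norm_sq, h2]; norm_num
    have cθ2 : (starRingEnd ℂ) (ϑ₂ ζ) = (ϑ₂ ζ)⁻¹ := by
      apply eq_inv_of_mul_eq_one_left
      rw [mul_comm, Complex.mul_conj]
      norm_cast
      rw [Complex.normSq_eq_norm_sq, h3]; norm_num
    rw [hΘ ζ]
    apply fin2_unitary
    · simp only [_root_.map_mul, map_div₀, map_sub, map_add, _root_.map_one, map_ofNat,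
        cζ, cθ1, cθ2, Complex.conj_conj]
      conv_rhs => rw [← key]
      field_simp
      ring
    · simp only [_root_.map_mul, map_div₀, map_sub, map_add, _root_.map_one, map_ofNat,
        cζ, cθ1, cθ2, Complex.conj_conj]
      field_simp
      ring
    · simp only [_root_.map_mul, map_div₀, map_sub, map_add, _root_.map_one, map_ofNat,
        cζ, cθ1, cθ2, Complex.conj_conj]
      field_simp
      ring
    · simp only [_root_.map_mul, map_div₀, map_sub, map_add, _root_.map_one, map_ofNat,
        cζ, cθ1, cθ2, Complex.conj_conj]
      conv_rhs => rw [← key]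
      field_simp
      ring
  · intro z hz
    have h : (Θ z).det = -(c * (starRingEnd ℂ) c * (1 + (starRingEnd ℂ) a * a)) * (ϑ₁ z * ϑ₂ z) := by
      rw [hΘ z, Matrix.det_fin_two_of]
      field_simp
      ring
    rw [h, key]; ring
end

section
/- Let T be a bounded operator on a Hilbert space H with 2×2 block upper-triangular form T = [T₁, A; 0, T₂] relative to H = H₁ ⊕ H₂. Let K₂ be a Hilbert space, S₂ a bounded operator on K₂, and Y₂ : K₂ → H₂ a surjective bounded operator with Y₂S₂ = T₂Y₂. Suppose there exists a bounded operator Z : K₂ → H₁ satisfying ZS₂ − T₁Z = A·Y₂. Then the operator Y : H₁ ⊕ K₂ → H defined blockwise by Y = [I, Z; 0, Y₂] satisfies Y·(T₁ ⊕ S₂) = T·Y, and Y is surjective. -/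
theorem stmt15 {H K₂ : Type*} [NormedAddCommGroup H] [InnerProductSpace ℂ H] [CompleteSpace H]
    [NormedAddCommGroup K₂] [InnerProductSpace ℂ K₂]
    (H₁ : Submodule ℂ H) [Submodule.HasOrthogonalProjection H₁]
    (T : H →L[ℂ] H) (T₁ : H₁ →L[ℂ] H₁) (T₂ : H₁ᗮ →L[ℂ] H₁ᗮ) (A : H₁ᗮ →L[ℂ] H₁)
    (hT1 : ∀ x : H₁, (T₁ x : H) = T x)
    (hT2 : ∀ y : H₁ᗮ, T y = (A y : H) + (T₂ y : H))
    (S₂ : K₂ →L[ℂ] K₂) (Y₂ : K₂ →L[ℂ] H₁ᗮ) (hY₂surj : Function.Surjective Y₂)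
    (hintw : ∀ h : K₂, Y₂ (S₂ h) = T₂ (Y₂ h))
    (Z : K₂ →L[ℂ] H₁) (hZ : ∀ h : K₂, Z (S₂ h) - T₁ (Z h) = A (Y₂ h)) :
    (∀ (x : H₁) (h : K₂),
        ((T₁ x : H) + (Z (S₂ h) : H) + (Y₂ (S₂ h) : H)) =
          T ((x : H) + (Z h : H) + (Y₂ h : H))) ∧
    Function.Surjective (fun p : H₁ × K₂ => (p.1 : H) + (Z p.2 : H) + (Y₂ p.2 : H)) := by
  constructor
  · intro x h
    have h1 : Z (S₂ h) = T₁ (Z h) + A (Y₂ h) := by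
      have := hZ h; rw [sub_eq_iff_eq_add] at this; rw [this]; abel
    rw [map_add, map_add, ← hT1 x, ← hT1 (Z h), hT2 (Y₂ h), h1, hintw h]
    push_cast
    abel
  · intro v
    obtain ⟨h, hh⟩ := hY₂surj ((H₁ᗮ.orthogonalProjectionOnto) v)
    refine ⟨⟨(H₁.orthogonalProjectionOnto v) - Z h, h⟩, ?_⟩
    simp only
    push_cast
    rw [hh]
    have h2 := Submodule.starProjection_add_starProjection_orthogonal (K := H₁) v
    simp only [Submodule.starProjection_apply] at h2
    rw [sub_add_cancel]
    exact_mod_cast h2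
end

section
/- Let a₁, a₂ > 0 and let α_a(z) = exp(a(z+1)/(z−1)). Suppose θ ∈ H^∞ has the form θ(z) = (c̄/2)·(1 − z + (1+z)·α_{a₁}(z)·conj(α_{a₁}(0))) for some constant c ≠ 0. Then θ is not divisible in H^∞ by α_{a₀} for any a₀ > 0; that is, for every a₀ > 0 there is no g ∈ H^∞ with θ = α_{a₀}·g. -/
open Metric

theorem stmt19 (a₁ : ℝ) (ha₁ : 0 < a₁) (c : ℂ) (hc : c ≠ 0)
    (θ : ℂ → ℂ)
    (hθ : ∀ z : ℂ, θ z = (starRingEnd ℂ) c / 2 *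
        (1 - z + (1 + z) * Complex.exp ((a₁ : ℂ) * ((z + 1) / (z - 1))) *
          (starRingEnd ℂ) (Complex.exp ((a₁ : ℂ) * ((0 + 1) / (0 - 1)))))) :
    ∀ a₀ : ℝ, 0 < a₀ →
      ¬ ∃ g : ℂ → ℂ, DifferentiableOn ℂ g (ball 0 1) ∧
          (∃ C : ℝ, ∀ z ∈ ball (0 : ℂ) 1, ‖g z‖ ≤ C) ∧
          ∀ z ∈ ball (0 : ℂ) 1, θ z = Complex.exp ((a₀ : ℂ) * ((z + 1) / (z - 1))) * g z := by
  intro a₀ ha₀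
  rintro ⟨g, -, ⟨C, hC⟩, hg⟩
  have hcabs : 0 < ‖c‖ := by
    simpa using hc
  set ε : ℝ := min (1/2) (‖c‖ * a₀^2 / (8 * (|C| + 1))) with hεdef
  have hε0 : 0 < ε := lt_min (by norm_num) (by positivity)
  have hεhalf : ε ≤ 1/2 := min_le_left _ _
  have hεC : ε ≤ ‖c‖ * a₀^2 / (8 * (|C| + 1)) := min_le_right _ _
  set r : ℝ := 1 - ε with hrdef
  have hr0 : 0 ≤ r := by simp only [hrdef]; linarith
  have hr1 : r < 1 := by simp only [hrdef]; linarith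
  have hmem : (r : ℂ) ∈ ball (0 : ℂ) 1 := by
    rw [mem_ball_zero_iff]
    simpa [abs_of_nonneg hr0] using hr1
  have key := hg r hmem
  rw [hθ] at key
  set t : ℝ := (1 + r) / (1 - r) with htdef
  have h1r : (0:ℝ) < 1 - r := by linarith
  have ht0 : 0 < t := by positivity
  have hrne : (r : ℂ) - 1 ≠ 0 := by
    rw [sub_ne_zero]
    exact_mod_cast ne_of_lt hr1
  -- rewrite the complex Möbius value as a cast of a real number
  have hcast : ((r : ℂ) + 1) / ((r : ℂ) - 1) = ((-t : ℝ) : ℂ) := by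
    have h2 : (t : ℂ) * ((1 : ℂ) - (r : ℂ)) = 1 + (r : ℂ) := by
      have : t * (1 - r) = 1 + r := by
        rw [htdef, div_mul_cancel₀ _ (ne_of_gt h1r)]
      exact_mod_cast this
    rw [div_eq_iff hrne]
    push_cast
    linear_combination -h2
  have hexp1 : Complex.exp ((a₁ : ℂ) * (((r : ℂ) + 1) / ((r : ℂ) - 1)))
      = ((Real.exp (a₁ * (-t)) : ℝ) : ℂ) := by
    rw [hcast]
    rw [Complex.ofReal_exp]
    norm_cast
  have hexp0 : Complex.exp ((a₀ : ℂ) * (((r : ℂ) + 1) / ((r : ℂ) - 1)))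
      = ((Real.exp (a₀ * (-t)) : ℝ) : ℂ) := by
    rw [hcast]
    rw [Complex.ofReal_exp]
    norm_cast
  have hconj : (starRingEnd ℂ) (Complex.exp ((a₁ : ℂ) * (((0:ℂ) + 1) / ((0:ℂ) - 1))))
      = ((Real.exp (-a₁) : ℝ) : ℂ) := by
    have : ((a₁ : ℂ) * (((0:ℂ) + 1) / ((0:ℂ) - 1))) = ((-a₁ : ℝ) : ℂ) := by
      push_cast; norm_num
    rw [this, ← Complex.ofReal_exp, Complex.conj_ofReal]
  rw [hexp1, hexp0, hconj] at key
  set S : ℝ := (1 - r) + (1 + r) * Real.exp (a₁ * (-t)) * Real.exp (-a₁) with hSdef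
  have hSpos : 0 < S := by positivity
  have hbr : (1 : ℂ) - (r : ℂ) + (1 + (r : ℂ)) * ((Real.exp (a₁ * (-t)) : ℝ) : ℂ)
      * ((Real.exp (-a₁) : ℝ) : ℂ) = ((S : ℝ) : ℂ) := by
    simp only [hSdef]
    push_cast
    ring
  rw [hbr] at key
  -- take absolute values
  have habs := congrArg (‖·‖) key
  simp only [norm_mul, norm_div, Complex.norm_conj, Complex.norm_real, Real.norm_eq_abs,
    Complex.norm_two, abs_of_pos hSpos, abs_of_pos (Real.exp_pos _)] at habs
  -- habs : ‖c‖ / 2 * S = Real.exp (a₀ * -t) * Complex.abs (g r)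
  have hgr : ‖g ↑r‖ = ‖c‖ / 2 * S * Real.exp (a₀ * t) := by
    have hE : Real.exp (a₀ * -t) * Real.exp (a₀ * t) = 1 := by
      rw [← Real.exp_add]; ring_nf; exact Real.exp_zero
    have h2 : ‖c‖ / 2 * S * Real.exp (a₀ * t)
        = Real.exp (a₀ * -t) * Real.exp (a₀ * t) * ‖g ↑r‖ := by
      rw [habs]; ring
    rw [h2, hE, one_mul]
  -- lower bounds
  have hSge : ε ≤ S := by
    have : 0 ≤ (1 + r) * Real.exp (a₁ * (-t)) * Real.exp (-a₁) := by positivity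
    simp only [hSdef]
    linarith [this, hrdef]
  have htge : 1 / ε ≤ t := by
    rw [htdef, hrdef]
    rw [div_le_div_iff₀ hε0 (by linarith : (0:ℝ) < 1 - (1 - ε))]
    nlinarith
  have hexpge : (a₀ / ε)^2 / 4 ≤ Real.exp (a₀ * t) := by
    have h1 : a₀ / ε ≤ a₀ * t := by
      rw [div_eq_mul_one_div]
      exact mul_le_mul_of_nonneg_left htge (le_of_lt ha₀)
    have h2 : Real.exp (a₀ / ε) ≤ Real.exp (a₀ * t) := Real.exp_le_exp.mpr h1
    have hx : 0 ≤ a₀ / ε := by positivity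
    have h3 := Real.add_one_le_exp (a₀ / ε / 2)
    have h4 : Real.exp (a₀ / ε) = Real.exp (a₀ / ε / 2) * Real.exp (a₀ / ε / 2) := by
      rw [← Real.exp_add]; ring_nf
    nlinarith [Real.exp_pos (a₀ / ε / 2)]
  have hfinal : |C| + 1 ≤ ‖g ↑r‖ := by
    rw [hgr]
    have h5 : ‖c‖ / 2 * ε * ((a₀ / ε)^2 / 4)
        ≤ ‖c‖ / 2 * S * Real.exp (a₀ * t) := by
      apply mul_le_mul
      · exact mul_le_mul_of_nonneg_left hSge (by positivity)
      · exact hexpge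
      · positivity
      · positivity
    have h6 : ‖c‖ / 2 * ε * ((a₀ / ε)^2 / 4) = ‖c‖ * a₀^2 / (8 * ε) := by
      field_simp
      ring
    have h7 : |C| + 1 ≤ ‖c‖ * a₀^2 / (8 * ε) := by
      rw [le_div_iff₀ (by positivity)]
      have h8 : ε * (8 * (|C| + 1)) ≤ ‖c‖ * a₀^2 := by
        have := (le_div_iff₀ (by positivity : (0:ℝ) < 8 * (|C| + 1))).mp hεC
        linarith
      nlinarith [abs_nonneg C]
    linarith [h6 ▸ h5]
  have hle := hC r hmem
  have : C < |C| + 1 := lt_of_le_of_lt (le_abs_self C) (by linarith)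
  linarith
end
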